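/- Let G = Z/n1 × ... × Z/nk with exactly s of the integers n1,...,nk even, acting trivially on R*. Then H^2(G, R*) is isomorphic to (Z/2)^{s(s+1)/2}; in particular |H^2(G, R*)| = 2^{s(s+1)/2}. -/

import Mathlib

set_option linter.unusedSectionVars false
set_option linter.unusedVariables false
set_option maxHeartbeats 1000000


/-- The group of (inhomogeneous) 2-cocycles of a group `G` with coefficients in an
abelian group `A` (written multiplicatively), with respect to the trivial action. -/
def cocycles2 (G A : Type*) [Group G] [CommGroup A] : Subgroup (G × G → A) where
  carrier := {C | ∀ a b c : G, C (b, c) * C (a, b * c) = C (a * b, c) * C (a, b)}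
  one_mem' := by intro a b c; simp
  mul_mem' := by
    intro C D hC hD a b c
    simp only [Pi.mul_apply]
    rw [mul_mul_mul_comm, hC a b c, hD a b c, mul_mul_mul_comm]
  inv_mem' := by
    intro C hC a b c
    simp only [Pi.inv_apply]
    rw [← mul_inv, hC a b c, mul_inv]

/-- The group of 2-coboundaries. -/
def coboundaries2 (G A : Type*) [Group G] [CommGroup A] : Subgroup (G × G → A) where
  carrier := {C | ∃ ρ : G → A, ∀ p : G × G, C p = ρ p.1 * ρ p.2 * (ρ (p.1 * p.2))⁻¹}
  one_mem' := ⟨fun _ => 1, by simp⟩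
  mul_mem' := by
    rintro C D ⟨ρ, hρ⟩ ⟨σ, hσ⟩
    refine ⟨fun g => ρ g * σ g, fun p => ?_⟩
    simp only [Pi.mul_apply, hρ p, hσ p, mul_inv]
    simp [mul_assoc, mul_comm, mul_left_comm]
  inv_mem' := by
    rintro C ⟨ρ, hρ⟩
    refine ⟨fun g => (ρ g)⁻¹, fun p => ?_⟩
    simp only [Pi.inv_apply, hρ p, mul_inv, inv_inv]

/-- Second group cohomology of `G` with coefficients in `A`, with trivial `G`-action:
2-cocycles modulo 2-coboundaries. -/
def H2triv (G A : Type*) [Group G] [CommGroup A] :=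
  cocycles2 G A ⧸ ((coboundaries2 G A).subgroupOf (cocycles2 G A))

noncomputable instance (G A : Type*) [Group G] [CommGroup A] : Group (H2triv G A) :=
  QuotientGroup.Quotient.group _


section Map

variable {G A B : Type*} [Group G] [CommGroup A] [CommGroup B]

/-- map on cocycles induced by a coefficient hom. -/
def mapCocycles (f : A →* B) : cocycles2 G A →* cocycles2 G B where
  toFun C := ⟨fun p => f (C.1 p), by
    intro a b c
    have h := C.2 a b c
    rw [← map_mul, ← map_mul, h]⟩
  map_one' := by ext p; simp
  map_mul' C D := by ext p; simp

lemma mapCocycles_mem_coboundaries (f : A →* B) (C : cocycles2 G A)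
    (h : (C : G × G → A) ∈ coboundaries2 G A) :
    ((mapCocycles f C : cocycles2 G B) : G × G → B) ∈ coboundaries2 G B := by
  obtain ⟨ρ, hρ⟩ := h
  exact ⟨fun g => f (ρ g), fun p => by simp [mapCocycles, hρ p]⟩

/-- induced map on H². -/
noncomputable def mapH2 (f : A →* B) : H2triv G A →* H2triv G B :=
  QuotientGroup.lift _ ((QuotientGroup.mk' _).comp (mapCocycles f)) (by
    intro C hC
    show QuotientGroup.mk _ = 1
    apply (QuotientGroup.eq_one_iff _).mpr
    rw [Subgroup.mem_subgroupOf] at hC ⊢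
    exact mapCocycles_mem_coboundaries f C hC)

lemma mapH2_mk (f : A →* B) (C : cocycles2 G A) :
    mapH2 f (QuotientGroup.mk C) = QuotientGroup.mk (mapCocycles f C) := rfl

end Map

section RealSign

/-- sign homomorphism ℝˣ → Multiplicative (ZMod 2) -/
noncomputable def sgnHom : ℝˣ →* Multiplicative (ZMod 2) where
  toFun x := if (0:ℝ) < (x:ℝ) then 1 else Multiplicative.ofAdd 1
  map_one' := by simp
  map_mul' x y := by
    have hx := x.ne_zero
    have hy := y.ne_zero
    rcases hx.lt_or_gt with hx | hx <;> rcases hy.lt_or_gt with hy | hy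
    · have : (0:ℝ) < (x:ℝ) * (y:ℝ) := mul_pos_of_neg_of_neg hx hy
      simp [Units.val_mul, this, not_lt.2 hx.le, not_lt.2 hy.le,
        (by decide : (Multiplicative.ofAdd (1 : ZMod 2)) * (Multiplicative.ofAdd 1) = 1)]
    · have : (x:ℝ) * (y:ℝ) < 0 := mul_neg_of_neg_of_pos hx hy
      simp [Units.val_mul, not_lt.2 this.le, not_lt.2 hx.le, hy]
    · have : (x:ℝ) * (y:ℝ) < 0 := mul_neg_of_pos_of_neg hx hy
      simp [Units.val_mul, not_lt.2 this.le, hx, not_lt.2 hy.le]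
    · have : (0:ℝ) < (x:ℝ) * (y:ℝ) := mul_pos hx hy
      simp [Units.val_mul, this, hx, hy]

def iotaHom : Multiplicative (ZMod 2) →* ℝˣ where
  toFun m := if m = 1 then 1 else (-1 : ℝˣ)
  map_one' := by simp
  map_mul' x y := by
    have hcases : ∀ m : Multiplicative (ZMod 2), m = 1 ∨ m = Multiplicative.ofAdd 1 := by decide
    have h1 : (Multiplicative.ofAdd (1 : ZMod 2)) ≠ 1 := by decide
    rcases hcases x with hx | hx <;> rcases hcases y with hy | hy <;>
      subst hx <;> subst hy <;>
      simp [h1, (by decide : (Multiplicative.ofAdd (1 : ZMod 2)) * (Multiplicative.ofAdd 1) = 1)]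

lemma sgn_iota (m : Multiplicative (ZMod 2)) : sgnHom (iotaHom m) = m := by
  have hcases : ∀ m : Multiplicative (ZMod 2), m = 1 ∨ m = Multiplicative.ofAdd 1 := by decide
  rcases hcases m with hm | hm <;> subst hm
  · simp [iotaHom, sgnHom]
  · have h1 : (Multiplicative.ofAdd (1 : ZMod 2)) ≠ 1 := by decide
    simp [iotaHom, sgnHom, h1]

lemma pos_mul_iota_sgn_inv (x : ℝˣ) : (0:ℝ) < (x * (iotaHom (sgnHom x))⁻¹ : ℝˣ) := by
  rcases x.ne_zero.lt_or_gt with hx | hx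
  · have h1 : (Multiplicative.ofAdd (1 : ZMod 2)) ≠ 1 := by decide
    have : sgnHom x = Multiplicative.ofAdd 1 := by simp [sgnHom, not_lt.2 hx.le]
    rw [this]
    simp only [iotaHom, MonoidHom.coe_mk, OneHom.coe_mk, if_neg h1]
    simp only [Units.val_mul]
    have : ((((-1:ℝˣ))⁻¹ : ℝˣ) : ℝ) = -1 := by norm_num
    rw [this]
    nlinarith
  · have : sgnHom x = 1 := by simp [sgnHom, hx]
    rw [this]
    simp [hx]

end RealSign
section Avg

variable {G : Type*} [CommGroup G] [Fintype G]


lemma positive_cocycle_is_coboundary (C : G × G → ℝˣ)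
    (hC : ∀ a b c : G, C (b, c) * C (a, b * c) = C (a * b, c) * C (a, b))
    (hpos : ∀ p, (0:ℝ) < (C p : ℝ)) :
    ∃ ρ : G → ℝˣ, ∀ p : G × G, C p = ρ p.1 * ρ p.2 * (ρ (p.1 * p.2))⁻¹ := by
  set N := Fintype.card G with hN
  have hN0 : N ≠ 0 := Fintype.card_ne_zero
  set S : G → ℝ := fun g => ∏ x, (C (g, x) : ℝ) with hS
  have hSpos : ∀ g, 0 < S g := fun g => Finset.prod_pos (fun i _ => hpos _)
  have key : ∀ a b : G, S a * S b = S (a * b) * (C (a, b) : ℝ) ^ N := by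
    intro a b
    have h1 : ∀ c : G, ((C (b, c) : ℝ) * (C (a, b * c) : ℝ))
        = (C (a * b, c) : ℝ) * (C (a, b) : ℝ) := by
      intro c
      have := congrArg Units.val (hC a b c)
      simpa using this
    have h2 : (∏ c : G, ((C (b, c) : ℝ) * (C (a, b * c) : ℝ)))
        = ∏ c : G, ((C (a * b, c) : ℝ) * (C (a, b) : ℝ)) :=
      Finset.prod_congr rfl (fun c _ => h1 c)
    rw [Finset.prod_mul_distrib, Finset.prod_mul_distrib] at h2
    have h3 : (∏ c : G, (C (a, b * c) : ℝ)) = S a := by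
      exact Equiv.prod_comp (Equiv.mulLeft b) (fun c => (C (a, c) : ℝ))
    have h4 : (∏ _c : G, (C (a, b) : ℝ)) = (C (a, b) : ℝ) ^ N := by
      rw [Finset.prod_const, Finset.card_univ]
    rw [h3, h4] at h2
    rw [mul_comm]; exact h2
  have hr : ∀ g, (0:ℝ) < (S g) ^ ((N:ℝ)⁻¹) := fun g => Real.rpow_pos_of_pos (hSpos g) _
  refine ⟨fun g => Units.mk0 ((S g) ^ ((N:ℝ)⁻¹)) (hr g).ne', fun p => ?_⟩
  obtain ⟨a, b⟩ := p
  apply Units.ext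
  simp only [Units.val_mul, Units.val_inv_eq_inv_val, Units.val_mk0]
  have hRpos : (0:ℝ) < (S a) ^ ((N:ℝ)⁻¹) * (S b) ^ ((N:ℝ)⁻¹) * ((S (a*b)) ^ ((N:ℝ)⁻¹))⁻¹ := by
    exact mul_pos (mul_pos (hr a) (hr b)) (inv_pos.2 (hr (a*b)))
  refine (pow_left_strictMonoOn₀ hN0).injOn (hpos (a, b)).le hRpos.le ?_
  have hre : ∀ g, ((S g) ^ ((N:ℝ)⁻¹)) ^ N = S g := fun g =>
    Real.rpow_inv_natCast_pow (hSpos g).le hN0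
  rw [mul_pow, mul_pow, inv_pow, hre, hre, hre]
  rw [key a b, mul_comm (S (a*b)) _, mul_assoc, mul_inv_cancel₀ (hSpos (a*b)).ne', mul_one]

end Avg

section RealIso

variable (G : Type*) [CommGroup G] [Fintype G]

lemma mem_cocycles2_iff {G A : Type*} [Group G] [CommGroup A] (C : G × G → A) :
    C ∈ cocycles2 G A ↔ ∀ a b c : G, C (b, c) * C (a, b * c) = C (a * b, c) * C (a, b) :=
  Iff.rfl

lemma mem_coboundaries2_iff {G A : Type*} [Group G] [CommGroup A] (C : G × G → A) :
    C ∈ coboundaries2 G A ↔ ∃ ρ : G → A, ∀ p : G × G, C p = ρ p.1 * ρ p.2 * (ρ (p.1 * p.2))⁻¹ :=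
  Iff.rfl

noncomputable def realIso : H2triv G ℝˣ ≃* H2triv G (Multiplicative (ZMod 2)) where
  toFun := mapH2 sgnHom
  invFun := mapH2 iotaHom
  map_mul' := map_mul _
  right_inv := by
    intro q
    induction q using QuotientGroup.induction_on with
    | H C =>
      rw [mapH2_mk, mapH2_mk]
      congr 1
      apply Subtype.ext
      funext p
      exact sgn_iota _
  left_inv := by
    intro q
    induction q using QuotientGroup.induction_on with
    | H C =>
      rw [mapH2_mk, mapH2_mk]
      apply QuotientGroup.eq.mpr
      rw [Subgroup.mem_subgroupOf]
      set D := (mapCocycles iotaHom (mapCocycles sgnHom C))⁻¹ * C with hD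
      have hDfun : ∀ p, (D : G × G → ℝˣ) p = (iotaHom (sgnHom (C.1 p)))⁻¹ * C.1 p := by
        intro p; rfl
      rw [mem_coboundaries2_iff]
      apply positive_cocycle_is_coboundary
      · exact (mem_cocycles2_iff (G := G) (A := ℝˣ) _).mp D.2
      · intro p
        rw [hDfun p, mul_comm]
        exact pos_mul_iota_sgn_inv (C.1 p)

end RealIso

section Helpers

lemma ofAdd_one_pow_val {m : ℕ} [NeZero m] (u : Multiplicative (ZMod m)) :
    (Multiplicative.ofAdd (1 : ZMod m)) ^ (Multiplicative.toAdd u).val = u := by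
  rw [← ofAdd_nsmul, nsmul_eq_mul, mul_one, ZMod.natCast_val, ZMod.cast_id]
  exact ofAdd_toAdd u

lemma ofAdd_one_pow {m : ℕ} (t : ℕ) :
    (Multiplicative.ofAdd (1 : ZMod m)) ^ t = Multiplicative.ofAdd ((t : ZMod m)) := by
  rw [← ofAdd_nsmul, nsmul_eq_mul, mul_one]

variable {k : ℕ} (n : Fin k → ℕ)

abbrev Gp := ∀ i, Multiplicative (ZMod (n i))
abbrev A2 := Multiplicative (ZMod 2)

def gen (i : Fin k) : Gp n := Pi.mulSingle i (Multiplicative.ofAdd 1)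

lemma gen_pow_apply_self (i : Fin k) (t : ℕ) :
    (gen n i ^ t) i = Multiplicative.ofAdd ((t : ZMod (n i))) := by
  rw [gen, Pi.pow_apply, Pi.mulSingle_eq_same, ofAdd_one_pow]

lemma gen_pow_apply_ne (i j : Fin k) (h : j ≠ i) (t : ℕ) :
    (gen n i ^ t) j = 1 := by
  rw [gen, Pi.pow_apply, Pi.mulSingle_eq_of_ne h, one_pow]

lemma gen_pow_card (i : Fin k) : gen n i ^ (n i) = 1 := by
  funext j
  rcases eq_or_ne j i with rfl | h
  · rw [gen_pow_apply_self, ZMod.natCast_self, Pi.one_apply]; rfl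
  · rw [gen_pow_apply_ne n i j h, Pi.one_apply]

lemma mulSingle_eq_gen_pow [∀ i, NeZero (n i)] (i : Fin k) (u : Multiplicative (ZMod (n i))) :
    Pi.mulSingle i u = gen n i ^ (Multiplicative.toAdd u).val := by
  conv_lhs => rw [← ofAdd_one_pow_val u]
  rw [gen, ← MonoidHom.mulSingle_apply, map_pow, MonoidHom.mulSingle_apply]

lemma prod_mulSingle_eq (g : Gp n) :
    ∏ i, Pi.mulSingle i (g i) = g := Finset.univ_prod_mulSingle g

lemma prod_gen_pow_val [∀ i, NeZero (n i)] (g : Gp n) :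
    ∏ i, gen n i ^ (Multiplicative.toAdd (g i)).val = g := by
  conv_rhs => rw [← prod_mulSingle_eq n g]
  exact Finset.prod_congr rfl fun i _ => (mulSingle_eq_gen_pow n i (g i)).symm

end Helpers

section Phi

variable {k : ℕ} (n : Fin k → ℕ)

abbrev IdxE := {i : Fin k // Even (n i)}
abbrev IdxP := {p : Fin k × Fin k // p.1 < p.2 ∧ Even (n p.1) ∧ Even (n p.2)}
abbrev Idx := IdxE n ⊕ IdxP n

/-- the additive value of a cocycle -/
def cval (C : cocycles2 (Gp n) (A2)) (a b : Gp n) : ZMod 2 :=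
  Multiplicative.toAdd ((C : (Gp n × Gp n) → A2) (a, b))

lemma cval_identity (C : cocycles2 (Gp n) (A2)) (a b c : Gp n) :
    cval n C b c + cval n C a (b * c) = cval n C (a * b) c + cval n C a b := by
  have h := C.2 a b c
  simpa [cval] using congrArg Multiplicative.toAdd h

def phiAdd (C : cocycles2 (Gp n) (A2)) : Idx n → ZMod 2
  | Sum.inl ⟨i, _⟩ => ∑ t ∈ Finset.range (n i), cval n C (gen n i ^ t) (gen n i)
  | Sum.inr ⟨⟨i, j⟩, _⟩ => cval n C (gen n i) (gen n j) + cval n C (gen n j) (gen n i)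

def phi : cocycles2 (Gp n) (A2) →* (Idx n → A2) where
  toFun C := fun idx => Multiplicative.ofAdd (phiAdd n C idx)
  map_one' := by
    funext idx
    have hone : ∀ a b, cval n (1 : cocycles2 (Gp n) (A2)) a b = 0 := fun a b => rfl
    rcases idx with ⟨i, hi⟩ | ⟨⟨i, j⟩, h⟩ <;> simp [phiAdd, hone]
  map_mul' C D := by
    funext idx
    have hmul : ∀ a b, cval n (C * D) a b = cval n C a b + cval n D a b := fun a b => rfl
    show Multiplicative.ofAdd (_ : ZMod 2) = Multiplicative.ofAdd (_ : ZMod 2) * Multiplicative.ofAdd (_ : ZMod 2)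
    rw [← ofAdd_add]
    congr 1
    rcases idx with ⟨i, hi⟩ | ⟨⟨i, j⟩, h⟩
    · simp [phiAdd, hmul, Finset.sum_add_distrib]
    · simp only [phiAdd, hmul]; ring
end Phi

section PhiCob
variable {k : ℕ} (n : Fin k → ℕ)

lemma even_natCast_zmod2_eq_zero {m : ℕ} (h : Even m) : (m : ZMod 2) = 0 := by
  obtain ⟨r, rfl⟩ := h
  have h2 : ((r + r : ℕ) : ZMod 2) = (2 : ZMod 2) * (r : ZMod 2) := by push_cast; ring
  rw [h2, show (2 : ZMod 2) = 0 by decide, zero_mul]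

lemma cval_coboundary (C : cocycles2 (Gp n) (A2)) {ρ : Gp n → A2}
    (hρ : ∀ p : Gp n × Gp n, (C : (Gp n × Gp n) → A2) p = ρ p.1 * ρ p.2 * (ρ (p.1 * p.2))⁻¹)
    (a b : Gp n) :
    cval n C a b = Multiplicative.toAdd (ρ a) + Multiplicative.toAdd (ρ b)
      - Multiplicative.toAdd (ρ (a * b)) := by
  have := congrArg Multiplicative.toAdd (hρ (a, b))
  simpa [cval, sub_eq_add_neg] using this

lemma phi_eq_one_of_coboundary (C : cocycles2 (Gp n) (A2))
    (h : (C : (Gp n × Gp n) → A2) ∈ coboundaries2 (Gp n) (A2)) : phi n C = 1 := by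
  obtain ⟨ρ, hρ⟩ := h
  set r : Gp n → ZMod 2 := fun g => Multiplicative.toAdd (ρ g) with hr
  have hc : ∀ a b, cval n C a b = r a + r b - r (a * b) := cval_coboundary n C hρ
  funext idx
  have hphi : (phi n) C idx = Multiplicative.ofAdd (phiAdd n C idx) := rfl
  rw [hphi, Pi.one_apply, show (1 : A2) = Multiplicative.ofAdd (0 : ZMod 2) from rfl]
  congr 1
  rcases idx with ⟨i, hi⟩ | ⟨⟨i, j⟩, hij⟩
  · show (∑ t ∈ Finset.range (n i), cval n C (gen n i ^ t) (gen n i)) = 0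
    have hterm : ∀ t, cval n C (gen n i ^ t) (gen n i)
        = r (gen n i) + (r (gen n i ^ t) - r (gen n i ^ (t + 1))) := by
      intro t
      rw [hc, ← pow_succ]
      ring
    rw [Finset.sum_congr rfl (fun t _ => hterm t), Finset.sum_add_distrib,
      Finset.sum_const, Finset.card_range, Finset.sum_range_sub']
    rw [gen_pow_card, pow_zero, sub_self, add_zero, nsmul_eq_mul,
      even_natCast_zmod2_eq_zero hi, zero_mul]
  · show cval n C (gen n i) (gen n j) + cval n C (gen n j) (gen n i) = 0
    rw [hc, hc, mul_comm (gen n j) (gen n i)]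
    exact (by decide : ∀ x y z : ZMod 2, (x + y - z) + (y + x - z) = 0) _ _ _
end PhiCob

section Generators
variable {k : ℕ} (n : Fin k → ℕ) [∀ i, NeZero (n i)]

def qnat (m : ℕ) [NeZero m] (x y : ZMod m) : ℕ := (x.val + y.val) / m

lemma qnat_decomp (m : ℕ) [NeZero m] (x y : ZMod m) :
    x.val + y.val = (x + y).val + m * qnat m x y := by
  rw [ZMod.val_add, qnat]; exact (Nat.mod_add_div _ _).symm

lemma qnat_identity (m : ℕ) [NeZero m] (a b c : ZMod m) :
    qnat m b c + qnat m a (b + c) = qnat m (a + b) c + qnat m a b := by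
  have h1 := qnat_decomp m a b
  have h2 := qnat_decomp m (a + b) c
  have h3 := qnat_decomp m b c
  have h4 := qnat_decomp m a (b + c)
  have hm : 0 < m := Nat.pos_of_ne_zero (NeZero.ne m)
  rw [add_assoc] at h2
  apply Nat.eq_of_mul_eq_mul_left hm
  rw [mul_add, mul_add]
  set Pab := m * qnat m a b
  set Pabc := m * qnat m (a + b) c
  set Pbc := m * qnat m b c
  set Pabc2 := m * qnat m a (b + c)
  omega

lemma toAdd_mul_apply (a b : Gp n) (i : Fin k) :
    Multiplicative.toAdd ((a * b) i) = Multiplicative.toAdd (a i) + Multiplicative.toAdd (b i) := rfl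

def carryFun (i₀ : Fin k) : Gp n × Gp n → A2 := fun p =>
  Multiplicative.ofAdd
    ((qnat (n i₀) (Multiplicative.toAdd (p.1 i₀)) (Multiplicative.toAdd (p.2 i₀)) : ℕ) : ZMod 2)

lemma carryFun_mem (i₀ : Fin k) : carryFun n i₀ ∈ cocycles2 (Gp n) (A2) := by
  intro a b c
  show Multiplicative.ofAdd _ * Multiplicative.ofAdd _
      = Multiplicative.ofAdd _ * Multiplicative.ofAdd _
  rw [← ofAdd_add, ← ofAdd_add]
  congr 1
  simp only [toAdd_mul_apply]
  rw [← Nat.cast_add, ← Nat.cast_add, qnat_identity]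

def carryCoc (i₀ : Fin k) : cocycles2 (Gp n) (A2) := ⟨carryFun n i₀, carryFun_mem n i₀⟩

lemma cval_carryCoc (i₀ : Fin k) (a b : Gp n) :
    cval n (carryCoc n i₀) a b
      = ((qnat (n i₀) (Multiplicative.toAdd (a i₀)) (Multiplicative.toAdd (b i₀)) : ℕ) : ZMod 2) :=
  rfl

lemma toAdd_gen_self (i : Fin k) : Multiplicative.toAdd (gen n i i) = (1 : ZMod (n i)) := by
  rw [gen, Pi.mulSingle_eq_same]; rfl

lemma toAdd_gen_ne {i j : Fin k} (h : j ≠ i) : Multiplicative.toAdd (gen n i j) = 0 := by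
  rw [gen, Pi.mulSingle_eq_of_ne h]; rfl

lemma toAdd_gen_pow_self (i : Fin k) (t : ℕ) :
    Multiplicative.toAdd ((gen n i ^ t) i) = ((t : ZMod (n i))) := by
  rw [gen_pow_apply_self]; rfl

lemma toAdd_gen_pow_ne {i j : Fin k} (h : j ≠ i) (t : ℕ) :
    Multiplicative.toAdd ((gen n i ^ t) j) = 0 := by
  rw [gen_pow_apply_ne n i j h]; rfl

lemma qnat_gen_pair_eq_zero (i₀ i j : Fin k) (hij : i ≠ j) :
    qnat (n i₀) (Multiplicative.toAdd (gen n i i₀)) (Multiplicative.toAdd (gen n j i₀)) = 0 := by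
  rcases eq_or_ne i₀ i with rfl | hne
  · rw [toAdd_gen_ne n (Ne.symm (fun h => hij h.symm))]
    apply Nat.div_eq_of_lt
    simpa using ZMod.val_lt _
  · rw [toAdd_gen_ne n hne]
    apply Nat.div_eq_of_lt
    simpa using ZMod.val_lt _

lemma phi_carryCoc (i₀ : Fin k) (h₀ : Even (n i₀)) :
    phi n (carryCoc n i₀)
      = Pi.mulSingle (Sum.inl ⟨i₀, h₀⟩ : Idx n) (Multiplicative.ofAdd (1 : ZMod 2)) := by
  have hn0 : n i₀ ≠ 0 := NeZero.ne _
  have hn2 : 2 ≤ n i₀ := by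
    obtain ⟨r, hr⟩ := h₀; omega
  funext idx
  have hphi : (phi n) (carryCoc n i₀) idx = Multiplicative.ofAdd (phiAdd n (carryCoc n i₀) idx) := rfl
  rw [hphi, Pi.mulSingle_apply]
  rcases idx with ⟨i, hi⟩ | ⟨⟨i, j⟩, hij⟩
  · by_cases hii : i = i₀
    · subst hii
      rw [if_pos rfl]
      congr 1
      show (∑ t ∈ Finset.range (n i), cval n (carryCoc n i) (gen n i ^ t) (gen n i)) = 1
      have hterm : ∀ t ∈ Finset.range (n i),
          cval n (carryCoc n i) (gen n i ^ t) (gen n i) = (((t + 1) / n i : ℕ) : ZMod 2) := by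
        intro t ht
        rw [Finset.mem_range] at ht
        haveI : Fact (1 < n i) := ⟨by omega⟩
        rw [cval_carryCoc, toAdd_gen_pow_self, toAdd_gen_self, qnat,
          ZMod.val_natCast_of_lt ht, ZMod.val_one _]
      rw [Finset.sum_congr rfl hterm, ← Nat.cast_sum]
      have hsum : (∑ t ∈ Finset.range (n i), (t + 1) / n i) = 1 := by
        rw [Finset.sum_eq_single_of_mem (n i - 1)
          (Finset.mem_range.mpr (by omega))]
        · rw [Nat.sub_add_cancel (by omega), Nat.div_self (by omega)]
        · intro t ht htne
          rw [Finset.mem_range] at ht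
          exact Nat.div_eq_of_lt (by omega)
      rw [hsum, Nat.cast_one]
    · rw [if_neg (by simp [hii])]
      show Multiplicative.ofAdd (∑ t ∈ Finset.range (n i), cval n (carryCoc n i₀) (gen n i ^ t) (gen n i)) = 1
      have hterm : ∀ t ∈ Finset.range (n i),
          cval n (carryCoc n i₀) (gen n i ^ t) (gen n i) = 0 := by
        intro t _
        rw [cval_carryCoc, toAdd_gen_pow_ne n (fun h => hii h.symm) t,
          toAdd_gen_ne n (fun h => hii h.symm), qnat]
        simp
      rw [Finset.sum_congr rfl hterm, Finset.sum_const, smul_zero]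
      rfl
  · rw [if_neg (by simp)]
    show Multiplicative.ofAdd (cval n (carryCoc n i₀) (gen n i) (gen n j)
      + cval n (carryCoc n i₀) (gen n j) (gen n i)) = 1
    have hne : i ≠ j := ne_of_lt hij.1
    rw [cval_carryCoc, cval_carryCoc, qnat_gen_pair_eq_zero n i₀ i j hne,
      qnat_gen_pair_eq_zero n i₀ j i hne.symm]
    simp

end Generators

section Bil
variable {k : ℕ} (n : Fin k → ℕ) [∀ i, NeZero (n i)]

def bilFun (i₀ j₀ : Fin k) (hi : (2 : ℕ) ∣ n i₀) (hj : (2 : ℕ) ∣ n j₀) : Gp n × Gp n → A2 :=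
  fun p => Multiplicative.ofAdd
    ((ZMod.castHom hi (ZMod 2)) (Multiplicative.toAdd (p.1 i₀))
      * (ZMod.castHom hj (ZMod 2)) (Multiplicative.toAdd (p.2 j₀)))

lemma bilFun_mem (i₀ j₀ : Fin k) (hi : (2 : ℕ) ∣ n i₀) (hj : (2 : ℕ) ∣ n j₀) :
    bilFun n i₀ j₀ hi hj ∈ cocycles2 (Gp n) (A2) := by
  intro a b c
  show Multiplicative.ofAdd _ * Multiplicative.ofAdd _
      = Multiplicative.ofAdd _ * Multiplicative.ofAdd _
  rw [← ofAdd_add, ← ofAdd_add]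
  congr 1
  simp only [toAdd_mul_apply, map_add]
  ring

def bilCoc (i₀ j₀ : Fin k) (hi : (2 : ℕ) ∣ n i₀) (hj : (2 : ℕ) ∣ n j₀) :
    cocycles2 (Gp n) (A2) := ⟨bilFun n i₀ j₀ hi hj, bilFun_mem n i₀ j₀ hi hj⟩

lemma cval_bilCoc (i₀ j₀ : Fin k) (hi : (2 : ℕ) ∣ n i₀) (hj : (2 : ℕ) ∣ n j₀) (a b : Gp n) :
    cval n (bilCoc n i₀ j₀ hi hj) a b
      = (ZMod.castHom hi (ZMod 2)) (Multiplicative.toAdd (a i₀))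
          * (ZMod.castHom hj (ZMod 2)) (Multiplicative.toAdd (b j₀)) := rfl

lemma phi_bilCoc (i₀ j₀ : Fin k) (hlt : i₀ < j₀) (hi₀ : Even (n i₀)) (hj₀ : Even (n j₀)) :
    phi n (bilCoc n i₀ j₀ (even_iff_two_dvd.mp hi₀) (even_iff_two_dvd.mp hj₀))
      = Pi.mulSingle (Sum.inr ⟨(i₀, j₀), hlt, hi₀, hj₀⟩ : Idx n)
          (Multiplicative.ofAdd (1 : ZMod 2)) := by
  set hi' := even_iff_two_dvd.mp hi₀
  set hj' := even_iff_two_dvd.mp hj₀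
  have hne : i₀ ≠ j₀ := ne_of_lt hlt
  funext idx
  have hphi : (phi n) (bilCoc n i₀ j₀ hi' hj') idx
      = Multiplicative.ofAdd (phiAdd n (bilCoc n i₀ j₀ hi' hj') idx) := rfl
  rw [hphi, Pi.mulSingle_apply]
  rcases idx with ⟨i, hi⟩ | ⟨⟨i, j⟩, hij⟩
  · rw [if_neg (by simp)]
    show Multiplicative.ofAdd
      (∑ t ∈ Finset.range (n i), cval n (bilCoc n i₀ j₀ hi' hj') (gen n i ^ t) (gen n i)) = 1
    have hterm : ∀ t ∈ Finset.range (n i),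
        cval n (bilCoc n i₀ j₀ hi' hj') (gen n i ^ t) (gen n i) = 0 := by
      intro t _
      rw [cval_bilCoc]
      rcases eq_or_ne i i₀ with rfl | hii
      · rw [toAdd_gen_ne n (Ne.symm hne)]
        simp
      · rw [toAdd_gen_pow_ne n (fun h => hii h.symm) t]
        simp
    rw [Finset.sum_congr rfl hterm, Finset.sum_const, smul_zero]
    rfl
  · show Multiplicative.ofAdd (cval n (bilCoc n i₀ j₀ hi' hj') (gen n i) (gen n j)
      + cval n (bilCoc n i₀ j₀ hi' hj') (gen n j) (gen n i)) = _
    rw [cval_bilCoc, cval_bilCoc]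
    by_cases hmatch : i = i₀ ∧ j = j₀
    · obtain ⟨rfl, rfl⟩ := hmatch
      rw [if_pos rfl]
      rw [toAdd_gen_self, toAdd_gen_self]
      rw [toAdd_gen_ne n hne, toAdd_gen_ne n (Ne.symm hne)]
      rw [map_one, map_one, map_zero, zero_mul, add_zero, mul_one]
    · have hcond : ¬ (Sum.inr ⟨(i, j), hij⟩ : Idx n) = Sum.inr ⟨(i₀, j₀), hlt, hi₀, hj₀⟩ := by
        simp only [Sum.inr.injEq, Subtype.mk.injEq, Prod.mk.injEq]
        intro h; exact hmatch ⟨h.1, h.2⟩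
      rw [if_neg hcond]
      have hz1 : (ZMod.castHom hi' (ZMod 2)) (Multiplicative.toAdd (gen n i i₀))
          * (ZMod.castHom hj' (ZMod 2)) (Multiplicative.toAdd (gen n j j₀)) = 0 := by
        rcases not_and_or.mp hmatch with h | h
        · rw [toAdd_gen_ne n (fun hh => h hh.symm)]; simp
        · rw [toAdd_gen_ne n (fun hh => h hh.symm)]; simp
      have hz2 : (ZMod.castHom hi' (ZMod 2)) (Multiplicative.toAdd (gen n j i₀))
          * (ZMod.castHom hj' (ZMod 2)) (Multiplicative.toAdd (gen n i j₀)) = 0 := by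
        by_cases hji : j = i₀
        · subst hji
          have : i ≠ j₀ := by
            intro hhh; subst hhh
            exact absurd (lt_trans hij.1 hlt) (lt_irrefl _)
          rw [toAdd_gen_ne n (fun hh => this hh.symm)]; simp
        · rw [toAdd_gen_ne n (fun hh => hji hh.symm)]; simp
      rw [hz1, hz2, add_zero]
      rfl

end Bil

section Surj
variable {k : ℕ} (n : Fin k → ℕ) [∀ i, NeZero (n i)]

def genCoc : Idx n → cocycles2 (Gp n) (A2)
  | Sum.inl ⟨i, _⟩ => carryCoc n i
  | Sum.inr ⟨(i, j), h⟩ => bilCoc n i j (even_iff_two_dvd.mp h.2.1) (even_iff_two_dvd.mp h.2.2)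

lemma phi_genCoc (idx : Idx n) :
    phi n (genCoc n idx) = Pi.mulSingle idx (Multiplicative.ofAdd (1 : ZMod 2)) := by
  rcases idx with ⟨i, hi⟩ | ⟨⟨i, j⟩, h⟩
  · exact phi_carryCoc n i hi
  · exact phi_bilCoc n i j h.1 h.2.1 h.2.2

lemma phi_surjective : Function.Surjective (phi n) := by
  intro f
  refine ⟨∏ idx, (genCoc n idx) ^ (Multiplicative.toAdd (f idx)).val, ?_⟩
  rw [map_prod]
  have hterm : ∀ idx : Idx n,
      phi n ((genCoc n idx) ^ (Multiplicative.toAdd (f idx)).val) = Pi.mulSingle idx (f idx) := by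
    intro idx
    rw [map_pow, phi_genCoc, ← MonoidHom.mulSingle_apply, ← map_pow, ofAdd_one_pow_val,
      MonoidHom.mulSingle_apply]
  rw [Finset.prod_congr rfl (fun idx _ => hterm idx), Finset.univ_prod_mulSingle]

end Surj

section Symm
variable {k : ℕ} (n : Fin k → ℕ) [∀ i, NeZero (n i)]

lemma cval_one_one_left (C : cocycles2 (Gp n) (A2)) (a : Gp n) :
    cval n C 1 a = cval n C 1 1 := by
  have key : ∀ b c : Gp n, cval n C 1 (b * c) = cval n C 1 b := by
    intro b c
    have h := cval_identity n C 1 b c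
    rw [one_mul] at h
    exact (by decide : ∀ x y z : ZMod 2, x + y = x + z → y = z) _ _ _ h
  have := key 1 a
  rwa [one_mul] at this

lemma cval_one_one_right (C : cocycles2 (Gp n) (A2)) (a : Gp n) :
    cval n C a 1 = cval n C 1 1 := by
  have h := cval_identity n C a 1 1
  rw [mul_one, mul_one] at h
  exact (by decide : ∀ x y : ZMod 2, x + y = y + y → y = x) _ _ h

/-- the antisymmetrization -/
def bval (C : cocycles2 (Gp n) (A2)) (a b : Gp n) : ZMod 2 :=
  cval n C a b + cval n C b a

lemma bval_comm (C : cocycles2 (Gp n) (A2)) (a b : Gp n) :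
    bval n C a b = bval n C b a := add_comm _ _

lemma bval_mul_left (C : cocycles2 (Gp n) (A2)) (a b d : Gp n) :
    bval n C (a * b) d = bval n C a d + bval n C b d := by
  have h1 := cval_identity n C a b d
  rw [mul_comm b d] at h1
  have h2 := cval_identity n C d a b
  rw [mul_comm d a] at h2
  have h3 := cval_identity n C a d b
  show cval n C (a * b) d + cval n C d (a * b)
    = (cval n C a d + cval n C d a) + (cval n C b d + cval n C d b)
  exact (by decide : ∀ x1 x2 x3 x4 x5 x6 x7 x8 x9 : ZMod 2,
    x1 + x2 = x3 + x4 → x4 + x5 = x6 + x7 → x8 + x2 = x6 + x9 →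
    x3 + x5 = (x9 + x7) + (x1 + x8)) _ _ _ _ _ _ _ _ _ h1 h2 h3

lemma bval_one_left (C : cocycles2 (Gp n) (A2))
    (hnorm : cval n C 1 1 = 0) (b : Gp n) : bval n C 1 b = 0 := by
  show cval n C 1 b + cval n C b 1 = 0
  rw [cval_one_one_left n C b, cval_one_one_right n C b, hnorm, add_zero]

/-- homomorphism `x ↦ ofAdd (bval C x y)` -/
def bhomL (C : cocycles2 (Gp n) (A2)) (hnorm : cval n C 1 1 = 0) (y : Gp n) :
    Gp n →* A2 where
  toFun x := Multiplicative.ofAdd (bval n C x y)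
  map_one' := by
    show Multiplicative.ofAdd (bval n C 1 y) = 1
    rw [bval_one_left n C hnorm]; rfl
  map_mul' a b := by
    show Multiplicative.ofAdd (bval n C (a * b) y)
      = Multiplicative.ofAdd (bval n C a y) * Multiplicative.ofAdd (bval n C b y)
    rw [← ofAdd_add, bval_mul_left]

lemma bval_gen_gen_eq_zero (C : cocycles2 (Gp n) (A2)) (hnorm : cval n C 1 1 = 0)
    (hpairs : ∀ (i j : Fin k) (h : i < j) (hi : Even (n i)) (hj : Even (n j)),
      phiAdd n C (Sum.inr ⟨(i, j), h, hi, hj⟩) = 0)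
    (i j : Fin k) : bval n C (gen n i) (gen n j) = 0 := by
  have hodd : ∀ (i : Fin k), ¬ Even (n i) → ∀ y, bval n C (gen n i) y = 0 := by
    intro i hioc y
    have hpow : ∀ m : ℕ, bval n C (gen n i ^ m) y = m • bval n C (gen n i) y := by
      intro m
      induction m with
      | zero => rw [pow_zero, zero_smul, bval_one_left n C hnorm]
      | succ m ih =>
        rw [pow_succ, bval_mul_left, ih, succ_nsmul]
    have h0 := (hpow (n i)).symm
    rw [gen_pow_card, bval_one_left n C hnorm] at h0
    have hone : ((n i : ZMod 2)) = 1 := by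
      rw [← ZMod.natCast_mod (n i) 2, Nat.not_even_iff.mp hioc, Nat.cast_one]
    rwa [nsmul_eq_mul, hone, one_mul] at h0
  have hdiag : ∀ x : Gp n, bval n C x x = 0 := by
    intro x
    exact (by decide : ∀ u : ZMod 2, u + u = 0) _
  rcases lt_trichotomy i j with hlt | rfl | hlt
  · by_cases hi : Even (n i)
    · by_cases hj : Even (n j)
      · exact hpairs i j hlt hi hj
      · rw [bval_comm]; exact hodd j hj _
    · exact hodd i hi _
  · exact hdiag _
  · by_cases hi : Even (n i)
    · by_cases hj : Even (n j)
      · rw [bval_comm]; exact hpairs j i hlt hj hi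
      · rw [bval_comm]; exact hodd j hj _
    · exact hodd i hi _

lemma bval_eq_zero (C : cocycles2 (Gp n) (A2)) (hnorm : cval n C 1 1 = 0)
    (hpairs : ∀ (i j : Fin k) (h : i < j) (hi : Even (n i)) (hj : Even (n j)),
      phiAdd n C (Sum.inr ⟨(i, j), h, hi, hj⟩) = 0)
    (a b : Gp n) : bval n C a b = 0 := by
  have hgeny : ∀ (i : Fin k) (y : Gp n), bval n C y (gen n i) = 0 := by
    intro i y
    have hgen : bhomL n C hnorm (gen n i) = 1 := by
      apply MonoidHom.functions_ext
      intro j u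
      rw [mulSingle_eq_gen_pow n j u, map_pow]
      have h1 : bhomL n C hnorm (gen n i) (gen n j) = 1 := by
        show Multiplicative.ofAdd (bval n C (gen n j) (gen n i)) = 1
        rw [bval_gen_gen_eq_zero n C hnorm hpairs]; rfl
      rw [h1, one_pow, map_pow, MonoidHom.one_apply, one_pow]
    have := DFunLike.congr_fun hgen y
    rw [MonoidHom.one_apply] at this
    have h2 : Multiplicative.toAdd (Multiplicative.ofAdd (bval n C y (gen n i))) = 0 := by
      rw [show Multiplicative.ofAdd (bval n C y (gen n i)) = bhomL n C hnorm (gen n i) y from rfl,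
        this]; rfl
    simpa using h2
  have hall : bhomL n C hnorm a = 1 := by
    apply MonoidHom.functions_ext
    intro j u
    rw [mulSingle_eq_gen_pow n j u, map_pow]
    have h1 : bhomL n C hnorm a (gen n j) = 1 := by
      show Multiplicative.ofAdd (bval n C (gen n j) a) = 1
      rw [bval_comm, hgeny j a]; rfl
    rw [h1, one_pow, map_pow, MonoidHom.one_apply, one_pow]
  have := DFunLike.congr_fun hall b
  rw [MonoidHom.one_apply] at this
  have h2 : Multiplicative.toAdd (Multiplicative.ofAdd (bval n C b a)) = 0 := by
    rw [show Multiplicative.ofAdd (bval n C b a) = bhomL n C hnorm a b from rfl, this]; rfl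
  rw [bval_comm]
  simpa using h2

lemma cval_symm (C : cocycles2 (Gp n) (A2)) (hnorm : cval n C 1 1 = 0)
    (hpairs : ∀ (i j : Fin k) (h : i < j) (hi : Even (n i)) (hj : Even (n j)),
      phiAdd n C (Sum.inr ⟨(i, j), h, hi, hj⟩) = 0)
    (a b : Gp n) : cval n C a b = cval n C b a := by
  have h := bval_eq_zero n C hnorm hpairs a b
  exact (by decide : ∀ x y : ZMod 2, x + y = 0 → x = y) _ _ h

end Symm

section Ext
variable {k : ℕ} (n : Fin k → ℕ) [∀ i, NeZero (n i)]

structure NCoc where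
  c : Gp n → Gp n → ZMod 2
  ident : ∀ a b d : Gp n, c b d + c a (b * d) = c (a * b) d + c a b
  symm : ∀ a b : Gp n, c a b = c b a
  norm1 : ∀ a : Gp n, c 1 a = 0
  norm2 : ∀ a : Gp n, c a 1 = 0

structure TwE (D : NCoc n) where
  a : ZMod 2
  g : Gp n

variable {n}

instance (D : NCoc n) : CommGroup (TwE n D) where
  mul x y := ⟨x.a + y.a + D.c x.g y.g, x.g * y.g⟩
  one := ⟨0, 1⟩
  inv x := ⟨x.a + D.c x.g x.g⁻¹, x.g⁻¹⟩
  mul_assoc x y z := by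
    have h := D.ident x.g y.g z.g
    show (⟨(x.a + y.a + D.c x.g y.g) + z.a + D.c (x.g * y.g) z.g, (x.g * y.g) * z.g⟩ : TwE n D)
      = ⟨x.a + (y.a + z.a + D.c y.g z.g) + D.c x.g (y.g * z.g), x.g * (y.g * z.g)⟩
    congr 1
    · exact (by decide : ∀ p q r s x y z : ZMod 2, p + q = r + s →
        (x + y + s) + z + r = x + (y + z + p) + q) _ _ _ _ _ _ _ h
    · exact mul_assoc _ _ _
  one_mul x := by
    show (⟨0 + x.a + D.c 1 x.g, 1 * x.g⟩ : TwE n D) = x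
    rw [D.norm1, one_mul]
    show (⟨0 + x.a + 0, x.g⟩ : TwE n D) = x
    rw [zero_add, add_zero]
  mul_one x := by
    show (⟨x.a + 0 + D.c x.g 1, x.g * 1⟩ : TwE n D) = x
    rw [D.norm2, mul_one]
    show (⟨x.a + 0 + 0, x.g⟩ : TwE n D) = x
    rw [add_zero, add_zero]
  inv_mul_cancel x := by
    show (⟨(x.a + D.c x.g x.g⁻¹) + x.a + D.c x.g⁻¹ x.g, x.g⁻¹ * x.g⟩ : TwE n D) = ⟨0, 1⟩
    rw [D.symm x.g⁻¹ x.g, inv_mul_cancel]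
    congr 1
    exact (by decide : ∀ u v : ZMod 2, (u + v) + u + v = 0) _ _
  mul_comm x y := by
    show (⟨x.a + y.a + D.c x.g y.g, x.g * y.g⟩ : TwE n D)
      = ⟨y.a + x.a + D.c y.g x.g, y.g * x.g⟩
    rw [D.symm, mul_comm, add_comm x.a y.a]

variable (D : NCoc n)

lemma TwE.mul_def (x y : TwE n D) : x * y = ⟨x.a + y.a + D.c x.g y.g, x.g * y.g⟩ := rfl
lemma TwE.one_def : (1 : TwE n D) = ⟨0, 1⟩ := rfl

/-- projection to `Gp n` as a monoid hom -/
def TwE.gHom : TwE n D →* Gp n where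
  toFun x := x.g
  map_one' := rfl
  map_mul' _ _ := rfl

def zz (i : Fin k) : TwE n D := ⟨0, gen n i⟩

lemma zz_pow (i : Fin k) (m : ℕ) :
    (zz D i) ^ m = ⟨∑ t ∈ Finset.range m, D.c (gen n i ^ t) (gen n i), gen n i ^ m⟩ := by
  induction m with
  | zero => simp [zz, TwE.one_def]
  | succ m ih =>
    rw [pow_succ, ih, TwE.mul_def, Finset.sum_range_succ, pow_succ]
    congr 1
    simp [zz]

lemma sq_of_g_eq_one (x : TwE n D) (h : x.g = 1) : x ^ 2 = 1 := by
  rw [pow_two, TwE.mul_def, h, D.norm2, TwE.one_def]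
  congr 1
  · exact (by decide : ∀ u : ZMod 2, u + u + 0 = 0) _
  · rw [one_mul]

def ww (i : Fin k) : TwE n D := (zz D i) ^ (if Even (n i) then 1 else n i + 1)

lemma ww_g (i : Fin k) : (ww D i).g = gen n i := by
  rw [ww]
  split
  · rw [pow_one]; rfl
  · have : ((zz D i) ^ (n i + 1)).g = (gen n i) ^ (n i + 1) := by
      rw [zz_pow]
    rw [this, pow_succ, gen_pow_card, one_mul]

lemma ww_pow_card (i : Fin k)
    (heven : Even (n i) → ∑ t ∈ Finset.range (n i), D.c (gen n i ^ t) (gen n i) = 0) :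
    (ww D i) ^ (n i) = 1 := by
  rw [ww]
  split
  · next h =>
    rw [pow_one, zz_pow, heven h, gen_pow_card, TwE.one_def]
  · next h =>
    obtain ⟨m, hm⟩ := Nat.odd_iff.mpr (Nat.not_even_iff.mp h)
    have hsq : ((zz D i) ^ (n i)) ^ 2 = 1 := by
      apply sq_of_g_eq_one
      show ((zz D i) ^ (n i)).g = 1
      rw [zz_pow, gen_pow_card]
    rw [← pow_mul]
    have harith : (n i + 1) * n i = (n i * 2) * (m + 1) := by rw [hm]; ring
    rw [harith, pow_mul, pow_mul, hsq, one_pow]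

variable [∀ i, NeZero (n i)]

/-- the splitting section -/
def tauFun (g : Gp n) : TwE n D := ∏ i, (ww D i) ^ (Multiplicative.toAdd (g i)).val

lemma tauFun_mul
    (heven : ∀ i, Even (n i) → ∑ t ∈ Finset.range (n i), D.c (gen n i ^ t) (gen n i) = 0)
    (g h : Gp n) : tauFun D (g * h) = tauFun D g * tauFun D h := by
  rw [tauFun, tauFun, tauFun, ← Finset.prod_mul_distrib]
  apply Finset.prod_congr rfl
  intro i _
  rw [← pow_add]
  have hmod : (Multiplicative.toAdd ((g * h) i)).val
      = ((Multiplicative.toAdd (g i)).val + (Multiplicative.toAdd (h i)).val) % n i := by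
    rw [toAdd_mul_apply, ZMod.val_add]
  rw [hmod, ← pow_eq_pow_mod _ (ww_pow_card D i (heven i))]

lemma tauFun_g (g : Gp n) : (tauFun D g).g = g := by
  have : (tauFun D g).g = TwE.gHom D (tauFun D g) := rfl
  rw [this, tauFun, map_prod]
  have hterm : ∀ i, TwE.gHom D ((ww D i) ^ (Multiplicative.toAdd (g i)).val)
      = (gen n i) ^ (Multiplicative.toAdd (g i)).val := by
    intro i
    rw [map_pow]
    congr 1
    exact ww_g D i
  rw [Finset.prod_congr rfl (fun i _ => hterm i)]
  exact prod_gen_pow_val n g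

lemma ncoc_coboundary
    (heven : ∀ i, Even (n i) → ∑ t ∈ Finset.range (n i), D.c (gen n i ^ t) (gen n i) = 0) :
    ∃ ρ : Gp n → ZMod 2, ∀ g h : Gp n, D.c g h = ρ g + ρ h - ρ (g * h) := by
  refine ⟨fun g => (tauFun D g).a, fun g h => ?_⟩
  have hmul := tauFun_mul D heven g h
  have ha : (tauFun D (g * h)).a
      = (tauFun D g).a + (tauFun D h).a + D.c (tauFun D g).g (tauFun D h).g := by
    rw [hmul]; rfl
  rw [tauFun_g, tauFun_g] at ha
  exact (by decide : ∀ x y z c : ZMod 2, x = y + z + c → c = y + z - x) _ _ _ _ ha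

end Ext

section Inj
variable {k : ℕ} (n : Fin k → ℕ) [∀ i, NeZero (n i)]

def constCoc (v : ZMod 2) : cocycles2 (Gp n) (A2) :=
  ⟨fun _ => Multiplicative.ofAdd v, fun a b c => rfl⟩

lemma constCoc_mem_coboundaries (v : ZMod 2) :
    ((constCoc n v : cocycles2 (Gp n) (A2)) : Gp n × Gp n → A2) ∈ coboundaries2 (Gp n) (A2) :=
  ⟨fun _ => Multiplicative.ofAdd v, fun p => by rw [mul_inv_cancel_right]; rfl⟩

lemma ofAdd_eq_one_iff (x : ZMod 2) : Multiplicative.ofAdd x = 1 ↔ x = 0 := by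
  constructor
  · intro h; simpa using congrArg Multiplicative.toAdd h
  · intro h; rw [h]; rfl

lemma coboundary_of_phi_eq_one (C : cocycles2 (Gp n) (A2)) (h : phi n C = 1) :
    (C : Gp n × Gp n → A2) ∈ coboundaries2 (Gp n) (A2) := by
  set v := cval n C 1 1 with hv
  set E := constCoc n v with hE
  have hEcob := constCoc_mem_coboundaries n v
  set Dc := C * E⁻¹ with hDc
  have hcvalD : ∀ a b : Gp n, cval n Dc a b = cval n C a b - v := by
    intro a b
    show Multiplicative.toAdd ((C : Gp n × Gp n → A2) (a, b) * ((E : Gp n × Gp n → A2) (a, b))⁻¹)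
        = cval n C a b - v
    rw [toAdd_mul, toAdd_inv, sub_eq_add_neg]
    rfl
  have hnormD : cval n Dc 1 1 = 0 := by rw [hcvalD, hv, sub_self]
  have hphiD : phi n Dc = 1 := by
    rw [hDc, map_mul, map_inv, h, phi_eq_one_of_coboundary n E hEcob, one_mul, inv_one]
  have hphiDval : ∀ idx, phiAdd n Dc idx = 0 := by
    intro idx
    have := congrFun hphiD idx
    rw [Pi.one_apply] at this
    exact (ofAdd_eq_one_iff _).mp this
  have hpairsD : ∀ (i j : Fin k) (hij : i < j) (hi : Even (n i)) (hj : Even (n j)),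
      phiAdd n Dc (Sum.inr ⟨(i, j), hij, hi, hj⟩) = 0 := fun i j hij hi hj => hphiDval _
  have hsymD := cval_symm n Dc hnormD hpairsD
  have hnorm1 : ∀ a, cval n Dc 1 a = 0 := fun a => by
    rw [cval_one_one_left n Dc a, hnormD]
  have hnorm2 : ∀ a, cval n Dc a 1 = 0 := fun a => by
    rw [cval_one_one_right n Dc a, hnormD]
  set D' : NCoc n := ⟨cval n Dc, cval_identity n Dc, hsymD, hnorm1, hnorm2⟩ with hD'
  have heven : ∀ i, Even (n i) →
      ∑ t ∈ Finset.range (n i), D'.c (gen n i ^ t) (gen n i) = 0 := by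
    intro i hi
    exact hphiDval (Sum.inl ⟨i, hi⟩)
  obtain ⟨ρ, hρ⟩ := ncoc_coboundary D' heven
  have hDcob : ((Dc : cocycles2 (Gp n) (A2)) : Gp n × Gp n → A2) ∈ coboundaries2 (Gp n) (A2) := by
    refine ⟨fun g => Multiplicative.ofAdd (ρ g), fun p => ?_⟩
    have := hρ p.1 p.2
    apply Multiplicative.toAdd.injective
    rw [toAdd_mul, toAdd_mul, toAdd_inv]
    show cval n Dc p.1 p.2 = _
    rw [show cval n Dc p.1 p.2 = D'.c p.1 p.2 from rfl, this, sub_eq_add_neg]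
    rfl
  have hCeq : C = Dc * E := by rw [hDc, inv_mul_cancel_right]
  have : ((C : cocycles2 (Gp n) (A2)) : Gp n × Gp n → A2)
      = ((Dc : cocycles2 (Gp n) (A2)) : Gp n × Gp n → A2) * ((E : cocycles2 (Gp n) (A2)) : Gp n × Gp n → A2) := by
    rw [hCeq]; rfl
  rw [this]
  exact Subgroup.mul_mem _ hDcob hEcob

end Inj

section Counting

lemma card_lt_pairs (α : Type*) [LinearOrder α] [Fintype α] [DecidableEq α] :
    Fintype.card {q : α × α // q.1 < q.2} = (Fintype.card α).choose 2 := by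
  have e : {q : α × α // q.1 < q.2} ≃ {t : Finset α // t.card = 2} := by
    refine
      { toFun := fun q => ⟨{q.1.1, q.1.2}, ?_⟩
        invFun := fun t => ⟨(t.1.min' ?_, t.1.max' ?_), ?_⟩
        left_inv := ?_
        right_inv := ?_ }
    · rw [Finset.card_insert_of_notMem (by simp [ne_of_lt q.2]), Finset.card_singleton]
    · rw [← Finset.card_pos, t.2]; norm_num
    · rw [← Finset.card_pos, t.2]; norm_num
    · exact Finset.min'_lt_max'_of_card t.1 (by rw [t.2]; norm_num)
    · rintro ⟨⟨a, b⟩, hab⟩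
      have hmin : ({a, b} : Finset α).min' (by simp) = a := by
        apply le_antisymm
        · exact Finset.min'_le _ a (by simp)
        · apply Finset.le_min'
          intro y hy
          rcases Finset.mem_insert.mp hy with rfl | hy
          · exact le_refl _
          · rw [Finset.mem_singleton] at hy
            subst hy
            exact le_of_lt hab
      have hmax : ({a, b} : Finset α).max' (by simp) = b := by
        apply le_antisymm
        · apply Finset.max'_le
          intro y hy
          rcases Finset.mem_insert.mp hy with rfl | hy
          · exact le_of_lt hab
          · rw [Finset.mem_singleton] at hy
            subst hy
            exact le_refl _
        · exact Finset.le_max' _ b (by simp)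
      simp only [Subtype.mk.injEq, Prod.mk.injEq]
      exact ⟨hmin, hmax⟩
    · rintro ⟨t, ht⟩
      simp only [Subtype.mk.injEq]
      apply Finset.eq_of_subset_of_card_le
      · intro y hy
        rcases Finset.mem_insert.mp hy with rfl | hy
        · exact t.min'_mem _
        · rw [Finset.mem_singleton] at hy
          subst hy
          exact t.max'_mem _
      · have hne : t.min' (by rw [← Finset.card_pos, ht]; norm_num)
            ≠ t.max' (by rw [← Finset.card_pos, ht]; norm_num) :=
          ne_of_lt (Finset.min'_lt_max'_of_card t (by rw [ht]; norm_num))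
        have hcard2 : ({t.min' (by rw [← Finset.card_pos, ht]; norm_num),
            t.max' (by rw [← Finset.card_pos, ht]; norm_num)} : Finset α).card = 2 := by
          rw [Finset.card_insert_of_notMem (by simpa using hne), Finset.card_singleton]
        exact le_of_eq (ht.trans hcard2.symm)
  rw [Fintype.card_congr e, Fintype.card_finset_len]

variable {k : ℕ} (n : Fin k → ℕ)

def idxPEquiv : IdxP n ≃ {q : IdxE n × IdxE n // q.1 < q.2} where
  toFun p := ⟨(⟨p.1.1, p.2.2.1⟩, ⟨p.1.2, p.2.2.2⟩), Subtype.mk_lt_mk.mpr p.2.1⟩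
  invFun q := ⟨(q.1.1.1, q.1.2.1), Subtype.mk_lt_mk.mp q.2, q.1.1.2, q.1.2.2⟩
  left_inv p := rfl
  right_inv q := rfl

lemma card_IdxP : Fintype.card (IdxP n) = (Fintype.card (IdxE n)).choose 2 := by
  rw [Fintype.card_congr (idxPEquiv n), card_lt_pairs]

lemma gauss_sum (s : ℕ) : s + s.choose 2 = s * (s + 1) / 2 := by
  rw [Nat.choose_two_right]
  rcases s with _ | m
  · simp
  · simp only [Nat.add_sub_cancel]
    have h2a : 2 ∣ (m + 1) * m := by
      rcases Nat.even_or_odd m with he | ho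
      · exact Dvd.dvd.mul_left (even_iff_two_dvd.mp he) _
      · refine Dvd.dvd.mul_right ?_ _
        obtain ⟨r, hr⟩ := ho
        exact ⟨r + 1, by omega⟩
    have h2b : 2 ∣ (m + 1) * (m + 1 + 1) := by
      rcases Nat.even_or_odd (m + 1) with he | ho
      · exact Dvd.dvd.mul_right (even_iff_two_dvd.mp he) _
      · refine Dvd.dvd.mul_left ?_ _
        obtain ⟨r, hr⟩ := ho
        exact ⟨r + 1, by omega⟩
    apply Nat.eq_of_mul_eq_mul_left (show 0 < 2 by norm_num)
    rw [Nat.mul_add, Nat.mul_div_cancel' h2a, Nat.mul_div_cancel' h2b]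
    ring

end Counting

section MainIso
variable {k : ℕ} (n : Fin k → ℕ) [∀ i, NeZero (n i)]

noncomputable def phiBar : H2triv (Gp n) (A2) →* (Idx n → A2) :=
  QuotientGroup.lift _ (phi n) (by
    intro C hC
    exact phi_eq_one_of_coboundary n C (Subgroup.mem_subgroupOf.mp hC))

lemma phiBar_bijective : Function.Bijective (phiBar n) := by
  constructor
  · rw [injective_iff_map_eq_one]
    intro q
    induction q using QuotientGroup.induction_on with
    | H C =>
      intro hq
      have hphi : phi n C = 1 := hq
      refine (QuotientGroup.eq_one_iff _).mpr ?_
      rw [Subgroup.mem_subgroupOf]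
      exact coboundary_of_phi_eq_one n C hphi
  · intro f
    obtain ⟨C, hC⟩ := phi_surjective n f
    exact ⟨QuotientGroup.mk C, hC⟩

noncomputable def mainIso : H2triv (Gp n) (A2) ≃* (Idx n → A2) :=
  MulEquiv.ofBijective (phiBar n) (phiBar_bijective n)

end MainIso

/-- for `G = ℤ/n₁ × ⋯ × ℤ/n_k` with exactly `s` of the `nᵢ` even, acting
trivially on `ℝ*`, `H²(G, ℝ*) ≅ (ℤ/2)^{s(s+1)/2}`; in particular
`|H²(G, ℝ*)| = 2^{s(s+1)/2}`. -/
theorem stmt7 (k : ℕ) (n : Fin k → ℕ) (hpos : ∀ i, 0 < n i) (s : ℕ)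
    (hs : (Finset.univ.filter fun i => Even (n i)).card = s) :
    Nonempty (H2triv (∀ i, Multiplicative (ZMod (n i))) ℝˣ ≃*
      (Fin (s * (s + 1) / 2) → Multiplicative (ZMod 2))) ∧
    Nat.card (H2triv (∀ i, Multiplicative (ZMod (n i))) ℝˣ) = 2 ^ (s * (s + 1) / 2) := by
  haveI : ∀ i, NeZero (n i) := fun i => ⟨(hpos i).ne'⟩
  have hcardE : Fintype.card (IdxE n) = s := by
    rw [Fintype.card_subtype]
    exact hs
  have hcard : Fintype.card (Idx n) = s * (s + 1) / 2 := by
    rw [Fintype.card_sum, hcardE, card_IdxP, hcardE, gauss_sum]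
  have e3 : (Idx n → A2) ≃* (Fin (s * (s + 1) / 2) → Multiplicative (ZMod 2)) :=
    MulEquiv.arrowCongr (Fintype.equivFinOfCardEq hcard) (MulEquiv.refl _)
  have iso : H2triv (∀ i, Multiplicative (ZMod (n i))) ℝˣ ≃*
      (Fin (s * (s + 1) / 2) → Multiplicative (ZMod 2)) :=
    ((realIso (Gp n)).trans (mainIso n)).trans e3
  refine ⟨⟨iso⟩, ?_⟩
  rw [Nat.card_congr iso.toEquiv, Nat.card_pi]
  have h2 : Nat.card (Multiplicative (ZMod 2)) = 2 := by
    rw [Nat.card_congr (Multiplicative.toAdd (α := ZMod 2)), Nat.card_zmod]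
  rw [Finset.prod_congr rfl (fun i _ => h2), Finset.prod_const, Finset.card_univ, Fintype.card_fin]
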